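/- arXiv:1709.05724 — 5 statements merged into one kernel-verified Lean document; each statement's English description precedes it below -/
import Mathlib

section
/- For every g ≥ 1, the set of 2g-tuples (f₁,…,f_{2g}) of elements of the affine group Aff(ℂ) satisfying the surface-group relation ∏_{i=1}^{g} [f_{2i−1}, f_{2i}] = id is in bijection with the variety X_{2g} = {(a₁,b₁,…,a_{2g},b_{2g}) ∈ ((ℂ∖{0}) × ℂ)^{2g} : ∑_{i=1}^{2g} (a_i − 1)·b_i = 0}. -/
open scoped commutatorElement

/-- The set of `2g`-tuples `(f₁,…,f_{2g})` of elements of the affine group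
`Aff(ℂ) = (ℂ ≃ᵃ[ℂ] ℂ)` satisfying the surface-group relation
`∏_{i=1}^{g} [f_{2i−1}, f_{2i}] = id` (indices here from `0`). -/
def SurfaceRepAff (g : ℕ) : Type :=
  {f : Fin (2 * g) → (ℂ ≃ᵃ[ℂ] ℂ) //
    ((List.finRange g).map fun i =>
        ⁅f ⟨2 * i.1, by have := i.isLt; omega⟩, f ⟨2 * i.1 + 1, by have := i.isLt; omega⟩⁆).prod
      = 1}

/-- The variety `X_k = {(a₁,b₁,…,a_k,b_k) ∈ ((ℂ∖{0}) × ℂ)^k : ∑ (a_i − 1)·b_i = 0}`. -/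
def Xvar (k : ℕ) : Type :=
  {p : Fin k → ℂ × ℂ // (∀ i, (p i).1 ≠ 0) ∧ ∑ i, ((p i).1 - 1) * (p i).2 = 0}

noncomputable section AuxSurf

namespace AuxSurf

/-- translation by `c` as an affine equivalence. -/
def transl (c : ℂ) : ℂ ≃ᵃ[ℂ] ℂ := AffineEquiv.constVAdd ℂ ℂ c

@[simp] lemma transl_apply (c x : ℂ) : transl c x = c + x := rfl

lemma transl_add (a b : ℂ) : transl (a + b) = transl a * transl b := by
  ext x; simp [transl, add_assoc]

@[simp] lemma transl_zero : transl 0 = 1 := by ext x; simp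

lemma transl_eq_one {c : ℂ} : transl c = 1 ↔ c = 0 := by
  constructor
  · intro h
    have := congrArg (fun e : ℂ ≃ᵃ[ℂ] ℂ => e 0) h
    simpa using this
  · rintro rfl; simp

/-- the affine map `x ↦ a x + b`. -/
def ofParams (a b : ℂ) (ha : a ≠ 0) : ℂ ≃ᵃ[ℂ] ℂ :=
  (LinearEquiv.smulOfNeZero ℂ ℂ a ha).toAffineEquiv.trans (AffineEquiv.constVAdd ℂ ℂ b)

@[simp] lemma ofParams_apply (a b : ℂ) (ha : a ≠ 0) (x : ℂ) :
    ofParams a b ha x = a * x + b := by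
  show b + _ = _
  simp [LinearEquiv.smulOfUnit, Units.smul_def, smul_eq_mul]
  ring

lemma linear_apply (f : ℂ ≃ᵃ[ℂ] ℂ) (x : ℂ) : f.linear x = f x - f 0 := by
  simpa using (f.toAffineMap.linearMap_vsub x 0)

lemma apply_eq (f : ℂ ≃ᵃ[ℂ] ℂ) (x : ℂ) : f x = (f 1 - f 0) * x + f 0 := by
  have h1 : f.linear x = x * f.linear 1 := by
    have := f.linear.map_smul x (1 : ℂ)
    simpa [smul_eq_mul] using this
  have h2 := linear_apply f x
  rw [h1, linear_apply f 1] at h2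
  linear_combination -h2

lemma A_ne_zero (f : ℂ ≃ᵃ[ℂ] ℂ) : f 1 - f 0 ≠ 0 := by
  intro h
  have : f 1 = f 0 := by linear_combination h
  exact one_ne_zero (f.injective this)

lemma inv_apply (f : ℂ ≃ᵃ[ℂ] ℂ) (y : ℂ) : f⁻¹ y = (y - f 0) / (f 1 - f 0) := by
  apply f.injective
  have ha := A_ne_zero f
  rw [show f (f⁻¹ y) = y from f.apply_symm_apply y, apply_eq f]
  field_simp
  ring

lemma commutator_eq (f g : ℂ ≃ᵃ[ℂ] ℂ) :
    ⁅f, g⁆ = transl ((f 1 - f 0 - 1) * g 0 - (g 1 - g 0 - 1) * f 0) := by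
  have ha := A_ne_zero f
  have hc := A_ne_zero g
  ext x
  show f (g (f⁻¹ (g⁻¹ x))) = _
  rw [inv_apply g, inv_apply f, apply_eq g, apply_eq f, transl_apply]
  field_simp
  ring


/-- pairing equivalence `Fin g × Fin 2 ≃ Fin (2*g)`. -/
def pairEquiv (g : ℕ) : Fin g × Fin 2 ≃ Fin (2 * g) where
  toFun x := ⟨2 * x.1.1 + x.2.1, by have := x.1.isLt; have := x.2.isLt; omega⟩
  invFun j := (⟨j.1 / 2, by have := j.isLt; omega⟩, ⟨j.1 % 2, by omega⟩)
  left_inv x := by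
    have := x.2.isLt
    ext <;> simp <;> omega
  right_inv j := by
    ext; simp; omega

lemma fin_sum_pair {M : Type*} [AddCommMonoid M] (g : ℕ) (F : Fin (2 * g) → M) :
    ∑ j, F j = ∑ i : Fin g,
      (F ⟨2 * i.1, by have := i.isLt; omega⟩ + F ⟨2 * i.1 + 1, by have := i.isLt; omega⟩) := by
  rw [← Equiv.sum_comp (pairEquiv g) F, Fintype.sum_prod_type]
  refine Finset.sum_congr rfl fun i _ => ?_
  rw [Fin.sum_univ_two]
  rfl

lemma prod_transl {α : Type*} (l : List α) (c : α → ℂ) :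
    (l.map fun i => transl (c i)).prod = transl ((l.map c).sum) := by
  induction l with
  | nil => simp
  | cons a l ih => simp [ih, transl_add]



@[simp] lemma ofParams_zero (a b : ℂ) (ha : a ≠ 0) : ofParams a b ha 0 = b := by
  rw [ofParams_apply]; ring

lemma ofParams_A (a b : ℂ) (ha : a ≠ 0) :
    ofParams a b ha 1 - ofParams a b ha 0 = a := by
  rw [ofParams_apply, ofParams_apply]; ring

lemma ofParams_eq (f : ℂ ≃ᵃ[ℂ] ℂ) (ha : f 1 - f 0 ≠ 0) :
    ofParams (f 1 - f 0) (f 0) ha = f := by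
  ext x; rw [ofParams_apply, ← apply_eq]

lemma rel_iff (g : ℕ) (f : Fin (2 * g) → (ℂ ≃ᵃ[ℂ] ℂ)) :
    ((List.finRange g).map fun i =>
        ⁅f ⟨2 * i.1, by have := i.isLt; omega⟩, f ⟨2 * i.1 + 1, by have := i.isLt; omega⟩⁆).prod
      = 1 ↔
    ∑ i : Fin g,
      ((f ⟨2 * i.1, by have := i.isLt; omega⟩ 1 - f ⟨2 * i.1, by have := i.isLt; omega⟩ 0 - 1)
          * f ⟨2 * i.1 + 1, by have := i.isLt; omega⟩ 0
        - (f ⟨2 * i.1 + 1, by have := i.isLt; omega⟩ 1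
            - f ⟨2 * i.1 + 1, by have := i.isLt; omega⟩ 0 - 1)
          * f ⟨2 * i.1, by have := i.isLt; omega⟩ 0) = 0 := by
  simp only [commutator_eq]
  rw [prod_transl, transl_eq_one, ← Fin.sum_univ_def]

end AuxSurf

namespace AuxSurf


/-- parameters of a tuple of affine maps, with the `b`-coordinates paired, swapped
and one negated. -/
noncomputable def fwdFun (g : ℕ) (f : Fin (2 * g) → (ℂ ≃ᵃ[ℂ] ℂ)) :
    Fin (2 * g) → ℂ × ℂ := fun j =>
  (f j 1 - f j 0,
    if _ : j.1 % 2 = 0 then f ⟨j.1 + 1, by have := j.isLt; omega⟩ 0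
    else -(f ⟨j.1 - 1, by have := j.isLt; omega⟩ 0))

@[simp] lemma fwdFun_fst (g : ℕ) (f : Fin (2 * g) → (ℂ ≃ᵃ[ℂ] ℂ)) (j : Fin (2 * g)) :
    (fwdFun g f j).1 = f j 1 - f j 0 := rfl

lemma fwdFun_snd_even (g : ℕ) (f : Fin (2 * g) → (ℂ ≃ᵃ[ℂ] ℂ)) (j : Fin (2 * g))
    (h : j.1 % 2 = 0) :
    (fwdFun g f j).2 = f ⟨j.1 + 1, by have := j.isLt; omega⟩ 0 := dif_pos h

lemma fwdFun_snd_odd (g : ℕ) (f : Fin (2 * g) → (ℂ ≃ᵃ[ℂ] ℂ)) (j : Fin (2 * g))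
    (h : ¬ j.1 % 2 = 0) :
    (fwdFun g f j).2 = -(f ⟨j.1 - 1, by have := j.isLt; omega⟩ 0) := dif_neg h

/-- tuple of affine maps built from parameters. -/
noncomputable def bwdFun (g : ℕ) (p : Fin (2 * g) → ℂ × ℂ) (hp1 : ∀ i, (p i).1 ≠ 0) :
    Fin (2 * g) → (ℂ ≃ᵃ[ℂ] ℂ) := fun j =>
  ofParams (p j).1
    (if _ : j.1 % 2 = 0 then -(p ⟨j.1 + 1, by have := j.isLt; omega⟩).2
     else (p ⟨j.1 - 1, by have := j.isLt; omega⟩).2) (hp1 j)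

lemma bwdFun_A (g : ℕ) (p : Fin (2 * g) → ℂ × ℂ) (hp1 : ∀ i, (p i).1 ≠ 0)
    (j : Fin (2 * g)) :
    bwdFun g p hp1 j 1 - bwdFun g p hp1 j 0 = (p j).1 := ofParams_A _ _ _

lemma bwdFun_zero_even (g : ℕ) (p : Fin (2 * g) → ℂ × ℂ) (hp1 : ∀ i, (p i).1 ≠ 0)
    (j : Fin (2 * g)) (h : j.1 % 2 = 0) :
    bwdFun g p hp1 j 0 = -(p ⟨j.1 + 1, by have := j.isLt; omega⟩).2 := by
  rw [bwdFun, ofParams_zero, dif_pos h]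

lemma bwdFun_zero_odd (g : ℕ) (p : Fin (2 * g) → ℂ × ℂ) (hp1 : ∀ i, (p i).1 ≠ 0)
    (j : Fin (2 * g)) (h : ¬ j.1 % 2 = 0) :
    bwdFun g p hp1 j 0 = (p ⟨j.1 - 1, by have := j.isLt; omega⟩).2 := by
  rw [bwdFun, ofParams_zero, dif_neg h]

lemma fwd_cond (g : ℕ) (f : Fin (2 * g) → (ℂ ≃ᵃ[ℂ] ℂ))
    (hf : ((List.finRange g).map fun i =>
        ⁅f ⟨2 * i.1, by have := i.isLt; omega⟩, f ⟨2 * i.1 + 1, by have := i.isLt; omega⟩⁆).prod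
      = 1) :
    ∑ j, ((fwdFun g f j).1 - 1) * (fwdFun g f j).2 = 0 := by
  rw [fin_sum_pair]
  refine Eq.trans (Finset.sum_congr rfl fun i _ => ?_) ((rel_iff g f).mp hf)
  rw [fwdFun_fst, fwdFun_fst,
    fwdFun_snd_even g f ⟨2 * i.1, by have := i.isLt; omega⟩ (by omega : 2 * i.1 % 2 = 0),
    fwdFun_snd_odd g f ⟨2 * i.1 + 1, by have := i.isLt; omega⟩ (by omega : ¬ (2 * i.1 + 1) % 2 = 0)]
  simp only [Nat.add_sub_cancel]
  ring

lemma bwd_cond (g : ℕ) (p : Fin (2 * g) → ℂ × ℂ) (hp1 : ∀ i, (p i).1 ≠ 0)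
    (hp2 : ∑ j, ((p j).1 - 1) * (p j).2 = 0) :
    ((List.finRange g).map fun i =>
        ⁅bwdFun g p hp1 ⟨2 * i.1, by have := i.isLt; omega⟩,
          bwdFun g p hp1 ⟨2 * i.1 + 1, by have := i.isLt; omega⟩⁆).prod = 1 := by
  have h2 := (fin_sum_pair g (fun j => ((p j).1 - 1) * (p j).2)).symm.trans hp2
  refine (rel_iff g _).mpr (Eq.trans (Finset.sum_congr rfl fun i _ => ?_) h2)
  rw [bwdFun_A, bwdFun_A,
    bwdFun_zero_even g p hp1 ⟨2 * i.1, by have := i.isLt; omega⟩ (by omega : 2 * i.1 % 2 = 0),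
    bwdFun_zero_odd g p hp1 ⟨2 * i.1 + 1, by have := i.isLt; omega⟩ (by omega : ¬ (2 * i.1 + 1) % 2 = 0)]
  simp only [Nat.add_sub_cancel]
  ring

/-- the forward bijection. -/
noncomputable def fwd (g : ℕ) (F : SurfaceRepAff g) : Xvar (2 * g) :=
  ⟨fwdFun g F.1, fun j => A_ne_zero (F.1 j), fwd_cond g F.1 F.2⟩

/-- the backward bijection. -/
noncomputable def bwd (g : ℕ) (P : Xvar (2 * g)) : SurfaceRepAff g :=
  ⟨bwdFun g P.1 P.2.1, bwd_cond g P.1 P.2.1 P.2.2⟩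

lemma bwd_fwd (g : ℕ) (F : SurfaceRepAff g) : bwd g (fwd g F) = F := by
  obtain ⟨f, hf⟩ := F
  apply Subtype.ext
  funext j
  show bwdFun g (fwdFun g f) _ j = f j
  ext x
  rw [show bwdFun g (fwdFun g f) (fun j => A_ne_zero (f j)) j x
      = ofParams _ _ _ x from rfl]
  erw [ofParams_apply, fwdFun_fst]
  by_cases h : j.1 % 2 = 0
  · rw [dif_pos h, fwdFun_snd_odd g f ⟨j.1 + 1, by have := j.isLt; omega⟩ (by omega : ¬ (j.1 + 1) % 2 = 0)]
    have e : (⟨j.1 + 1 - 1, by have := j.isLt; omega⟩ : Fin (2 * g)) = j := by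
      apply Fin.ext; simp
    rw [e, neg_neg, ← apply_eq]
  · rw [dif_neg h, fwdFun_snd_even g f ⟨j.1 - 1, by have := j.isLt; omega⟩ (by omega : (j.1 - 1) % 2 = 0)]
    have e : (⟨j.1 - 1 + 1, by have := j.isLt; omega⟩ : Fin (2 * g)) = j := by
      apply Fin.ext; simp; omega
    rw [e, ← apply_eq]

lemma fwd_bwd (g : ℕ) (P : Xvar (2 * g)) : fwd g (bwd g P) = P := by
  obtain ⟨p, hp1, hp2⟩ := P
  apply Subtype.ext
  funext j
  show fwdFun g (bwdFun g p hp1) j = p j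
  refine Prod.ext ?_ ?_
  · rw [fwdFun_fst, bwdFun_A]
  · by_cases h : j.1 % 2 = 0
    · rw [fwdFun_snd_even g _ j h,
        bwdFun_zero_odd g p hp1 ⟨j.1 + 1, by have := j.isLt; omega⟩ (by omega : ¬ (j.1 + 1) % 2 = 0)]
      have e : (⟨j.1 + 1 - 1, by have := j.isLt; omega⟩ : Fin (2 * g)) = j := by
        apply Fin.ext; simp
      rw [e]
    · rw [fwdFun_snd_odd g _ j h,
        bwdFun_zero_even g p hp1 ⟨j.1 - 1, by have := j.isLt; omega⟩ (by omega : (j.1 - 1) % 2 = 0)]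
      have e : (⟨j.1 - 1 + 1, by have := j.isLt; omega⟩ : Fin (2 * g)) = j := by
        apply Fin.ext; simp; omega
      rw [e, neg_neg]

end AuxSurf

/-- For `g ≥ 1`, the set of `2g`-tuples of elements of `Aff(ℂ)` satisfying the
surface-group relation is in bijection with the variety `X_{2g}`. -/
theorem surfaceRepAff_equiv_Xvar (g : ℕ) (hg : 1 ≤ g) :
    Nonempty (SurfaceRepAff g ≃ Xvar (2 * g)) :=
  ⟨⟨AuxSurf.fwd g, AuxSurf.bwd g, AuxSurf.bwd_fwd g, AuxSurf.fwd_bwd g⟩⟩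
end AuxSurf
end

section
/- Let 𝒢 be a connected groupoid, a an object of 𝒢, and G a group. Then there is a bijection between the set of functors from 𝒢 to the one-object groupoid SingleObj G and the product (Hom_{Grp}(𝒢_a, G)) × (G^{Obj(𝒢)∖{a}}), i.e., the set of pairs consisting of a group homomorphism from the vertex group 𝒢_a of a to G together with an arbitrary function from the objects of 𝒢 other than a to G. -/
open CategoryTheory

section Aux

variable {𝒢 : Type*} [Groupoid 𝒢] {G : Type*} [Group G]

lemma singleObj_map_comp (F : 𝒢 ⥤ SingleObj G) {b c d : 𝒢} (f : b ⟶ c) (g : c ⟶ d) :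
    (F.map (f ≫ g) : G) = (F.map g : G) * (F.map f : G) :=
  F.map_comp f g

lemma singleObj_map_id (F : 𝒢 ⥤ SingleObj G) (b : 𝒢) : (F.map (𝟙 b) : G) = 1 :=
  F.map_id b

lemma singleObj_map_inv (F : 𝒢 ⥤ SingleObj G) {b c : 𝒢} (f : b ⟶ c) :
    (F.map (Groupoid.inv f) : G) = (F.map f : G)⁻¹ := by
  have : (F.map (Groupoid.inv f) : G) * (F.map f : G) = 1 := by
    rw [← singleObj_map_comp F f (Groupoid.inv f), Groupoid.comp_inv, singleObj_map_id]
  exact eq_inv_of_mul_eq_one_left this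

/-- restriction of a functor `𝒢 ⥤ SingleObj G` to the vertex group at `a`, composed with
inversion (to fix up the composition order), as a group homomorphism. -/
def vertexHomOfFunctor (a : 𝒢) (F : 𝒢 ⥤ SingleObj G) : (a ⟶ a) →* G where
  toFun x := (F.map x : G)⁻¹
  map_one' := by
    have : (F.map (𝟙 a) : G) = 1 := singleObj_map_id F a
    show (F.map (𝟙 a) : G)⁻¹ = 1
    rw [this]; simp
  map_mul' x y := by
    show (F.map (x ≫ y) : G)⁻¹ = (F.map x : G)⁻¹ * (F.map y : G)⁻¹
    rw [singleObj_map_comp F x y]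
    exact mul_inv_rev _ _

/-- the functor built from a group homomorphism on the vertex group at `a`, a choice of
paths `p b : a ⟶ b`, and a scaling function `g : 𝒢 → G`. -/
def functorOfData (a : 𝒢) (p : ∀ b : 𝒢, a ⟶ b) (φ : (a ⟶ a) →* G) (g : 𝒢 → G) :
    𝒢 ⥤ SingleObj G where
  obj _ := SingleObj.star G
  map {b c} f := (g c * (φ (p b ≫ f ≫ Groupoid.inv (p c)))⁻¹ * (g b)⁻¹ : G)
  map_id b := by
    show (g b * (φ (p b ≫ 𝟙 b ≫ Groupoid.inv (p b)))⁻¹ * (g b)⁻¹ : G) = (1 : G)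
    rw [Category.id_comp, Groupoid.comp_inv]
    have : φ (𝟙 a) = 1 := φ.map_one
    rw [this]
    simp
  map_comp {b c d} f h := by
    show (g d * (φ (p b ≫ (f ≫ h) ≫ Groupoid.inv (p d)))⁻¹ * (g b)⁻¹ : G) =
      (g d * (φ (p c ≫ h ≫ Groupoid.inv (p d)))⁻¹ * (g c)⁻¹ : G) *
      (g c * (φ (p b ≫ f ≫ Groupoid.inv (p c)))⁻¹ * (g b)⁻¹ : G)
    have key : (p b ≫ (f ≫ h) ≫ Groupoid.inv (p d)) =
        (p b ≫ f ≫ Groupoid.inv (p c)) * (p c ≫ h ≫ Groupoid.inv (p d)) := by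
      show _ = (p b ≫ f ≫ Groupoid.inv (p c)) ≫ (p c ≫ h ≫ Groupoid.inv (p d))
      simp
    rw [key, φ.map_mul, mul_inv_rev]
    group

lemma functorOfData_map (a : 𝒢) (p : ∀ b : 𝒢, a ⟶ b) (φ : (a ⟶ a) →* G) (g : 𝒢 → G)
    {b c : 𝒢} (f : b ⟶ c) :
    ((functorOfData a p φ g).map f : G)
      = g c * (φ (p b ≫ f ≫ Groupoid.inv (p c)))⁻¹ * (g b)⁻¹ := rfl

end Aux

/-- For a connected groupoid `𝒢`, an object `a`, and a group `G`, the functors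
`𝒢 ⥤ SingleObj G` are in bijection with pairs of a group homomorphism from the
vertex group `𝒢_a = (a ⟶ a)` to `G` together with an arbitrary function from the
objects of `𝒢` other than `a` to `G`. -/
theorem functors_equiv_hom_times_free {𝒢 : Type*} [Groupoid 𝒢] (a : 𝒢)
    (G : Type*) [Group G] (hconn : ∀ b c : 𝒢, Nonempty (b ⟶ c)) :
    Nonempty ((𝒢 ⥤ SingleObj G) ≃ (((a ⟶ a) →* G) × ({b : 𝒢 // b ≠ a} → G))) := by
  classical
  -- choose a path from `a` to every object, with the path to `a` being the identity
  let p : ∀ b : 𝒢, a ⟶ b := fun b =>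
    if h : b = a then eqToHom h.symm else (hconn a b).some
  have hpa : p a = 𝟙 a := by simp [p]
  have hinvid : Groupoid.inv (𝟙 a) = 𝟙 a := by
    rw [Groupoid.inv_eq_inv]; simp
  let gt : ({b : 𝒢 // b ≠ a} → G) → 𝒢 → G := fun g b =>
    if h : b = a then 1 else g ⟨b, h⟩
  have hgta : ∀ g, gt g a = 1 := fun g => by simp [gt]
  refine ⟨{
    toFun := fun F => (vertexHomOfFunctor a F, fun b => (F.map (p b.1) : G))
    invFun := fun x => functorOfData a p x.1 (gt x.2)
    left_inv := ?_
    right_inv := ?_ }⟩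
  · intro F
    have hobj : ∀ b : 𝒢, (functorOfData a p (vertexHomOfFunctor a F)
        (gt fun b => (F.map (p b.1) : G))).obj b = F.obj b := fun _ => rfl
    refine CategoryTheory.Functor.ext hobj ?_
    intro b c f
    have heq : (eqToHom (hobj b).symm ≫ F.map f ≫ eqToHom (hobj c) : _) = F.map f := by simp
    rw [heq, functorOfData_map]
    have hgt : ∀ d : 𝒢, gt (fun b => (F.map (p b.1) : G)) d = (F.map (p d) : G) := by
      intro d
      by_cases h : d = a
      · rw [h]
        have h1 := hgta (fun b => (F.map (p b.1) : G))
        rw [h1, hpa, singleObj_map_id]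
      · simp [gt, h]
    rw [hgt, hgt]
    show (F.map (p c) : G) * ((F.map (p b ≫ f ≫ Groupoid.inv (p c)) : G)⁻¹)⁻¹ *
        (F.map (p b) : G)⁻¹ = F.map f
    rw [inv_inv, singleObj_map_comp F (p b) (f ≫ Groupoid.inv (p c)),
      singleObj_map_comp F f (Groupoid.inv (p c)), singleObj_map_inv F (p c)]
    group
  · rintro ⟨φ, g⟩
    refine Prod.ext ?_ ?_
    · refine MonoidHom.ext fun y => ?_
      show ((functorOfData a p φ (gt g)).map y : G)⁻¹ = φ y
      rw [functorOfData_map, hgta, hpa, hinvid, Category.id_comp, Category.comp_id]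
      simp
    · funext b
      show ((functorOfData a p φ (gt g)).map (p b.1) : G) = g b
      rw [functorOfData_map, hgta, hpa, Category.id_comp, Groupoid.comp_inv]
      have h1 : φ (𝟙 a) = 1 := φ.map_one
      have h2 : gt g b.1 = g b := by simp [gt, b.2]
      rw [h1, h2]
      simp
end

section
/- Let X be a path-connected topological space, A a subset of X, x₀ ∈ A, and G a group. Then there is a bijection between the set of functors from Π(X,A) (the full subgroupoid of the fundamental groupoid of X on the objects A) to the one-object groupoid SingleObj G, and the product (Hom_{Grp}(π₁(X,x₀), G)) × (G^{A∖{x₀}}), i.e., the set of pairs consisting of a group homomorphism from the fundamental group π₁(X,x₀) to G together with an arbitrary function from A∖{x₀} to G. -/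
open CategoryTheory

set_option linter.unusedSectionVars false

namespace FGEquivAux

attribute [local instance] Path.Homotopic.setoid

variable {X : Type*} [TopologicalSpace X] [PathConnectedSpace X] {A : Set X} {x₀ : X}
  {G : Type*} [Group G]

abbrev CC (A : Set X) := ObjectProperty.FullSubcategory (fun p : FundamentalGroupoid X => p.as ∈ A)

noncomputable instance : Groupoid (CC A) :=
  { (inferInstance : Category (CC A)) with
    inv := fun {a b} f => ObjectProperty.homMk (Groupoid.inv (show a.obj ⟶ b.obj from f.hom))
    inv_comp := fun {a b} f => InducedCategory.hom_ext (Groupoid.inv_comp (show a.obj ⟶ b.obj from f.hom))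
    comp_inv := fun {a b} f => InducedCategory.hom_ext (Groupoid.comp_inv (show a.obj ⟶ b.obj from f.hom)) }

def x₀C (hx₀ : x₀ ∈ A) : CC A := ⟨⟨x₀⟩, hx₀⟩

def ob (a : {a : X // a ∈ A ∧ a ≠ x₀}) : CC A := ⟨⟨a.1⟩, a.2.1⟩

/-- An element of the fundamental group as an endomorphism of `x₀C` in the full subcategory. -/
noncomputable def homC (hx₀ : x₀ ∈ A) (γ : FundamentalGroup X x₀) : x₀C hx₀ ⟶ x₀C hx₀ := ObjectProperty.homMk γ

lemma homC_one (hx₀ : x₀ ∈ A) : homC hx₀ 1 = 𝟙 (x₀C hx₀) := rfl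

lemma homC_mul (hx₀ : x₀ ∈ A) (γ δ : FundamentalGroup X x₀) :
    homC hx₀ (γ * δ) = homC hx₀ δ ≫ homC hx₀ γ := rfl

noncomputable def pp (x₀ a : X) : (⟨x₀⟩ : FundamentalGroupoid X) ⟶ ⟨a⟩ :=
  letI := Classical.dec (a = x₀)
  if h : a = x₀ then eqToHom (by rw [h]) else ⟦PathConnectedSpace.somePath x₀ a⟧

noncomputable def q (hx₀ : x₀ ∈ A) (a : CC A) : x₀C hx₀ ⟶ a :=
  ObjectProperty.homMk (show (⟨x₀⟩ : FundamentalGroupoid X) ⟶ a.obj from pp x₀ a.obj.as)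

lemma q_x₀ (hx₀ : x₀ ∈ A) : q hx₀ (x₀C hx₀) = 𝟙 (x₀C hx₀) := by
  show ObjectProperty.homMk (X := x₀C hx₀) (Y := x₀C hx₀) (pp x₀ x₀) = _
  simp only [pp, dif_pos rfl]
  exact InducedCategory.hom_ext (dif_pos rfl)

noncomputable def toAut (hx₀ : x₀ ∈ A) (ℓ : x₀C hx₀ ⟶ x₀C hx₀) : FundamentalGroup X x₀ :=
  ℓ.hom

lemma toAut_comp (hx₀ : x₀ ∈ A) (ℓ ℓ' : x₀C hx₀ ⟶ x₀C hx₀) :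
    toAut hx₀ (ℓ ≫ ℓ') = toAut hx₀ ℓ' * toAut hx₀ ℓ :=
  rfl

lemma toAut_id (hx₀ : x₀ ∈ A) : toAut hx₀ (𝟙 _) = 1 := rfl

lemma toAut_homC (hx₀ : x₀ ∈ A) (γ : FundamentalGroup X x₀) :
    toAut hx₀ (homC hx₀ γ) = γ := rfl

noncomputable def u (hx₀ : x₀ ∈ A) (gg : {a : X // a ∈ A ∧ a ≠ x₀} → G) (a : CC A) : G :=
  letI := Classical.dec (a.obj.as ≠ x₀)
  if h : a.obj.as ≠ x₀ then gg ⟨a.obj.as, a.property, h⟩ else 1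

noncomputable def Ψ (hx₀ : x₀ ∈ A) (φ : FundamentalGroup X x₀ →* G)
    (gg : {a : X // a ∈ A ∧ a ≠ x₀} → G) : CC A ⥤ SingleObj G where
  obj _ := SingleObj.star G
  map {a b} f := show G from
    u hx₀ gg b * φ (toAut hx₀ (q hx₀ a ≫ f ≫ Groupoid.inv (q hx₀ b))) * (u hx₀ gg a)⁻¹
  map_id a := by
    show u hx₀ gg a * φ (toAut hx₀ (q hx₀ a ≫ 𝟙 a ≫ Groupoid.inv (q hx₀ a))) * (u hx₀ gg a)⁻¹
      = 𝟙 (SingleObj.star G)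
    rw [Category.id_comp, Groupoid.comp_inv, toAut_id, map_one, mul_one, mul_inv_cancel]
    rfl
  map_comp {a b c} f f' := by
    show u hx₀ gg c * φ (toAut hx₀ (q hx₀ a ≫ (f ≫ f') ≫ Groupoid.inv (q hx₀ c)))
        * (u hx₀ gg a)⁻¹ = _
    have key : q hx₀ a ≫ (f ≫ f') ≫ Groupoid.inv (q hx₀ c)
        = (q hx₀ a ≫ f ≫ Groupoid.inv (q hx₀ b)) ≫ (q hx₀ b ≫ f' ≫ Groupoid.inv (q hx₀ c)) := by
      simp
    rw [key, toAut_comp, map_mul, SingleObj.comp_as_mul]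
    show _ = (u hx₀ gg c * φ (toAut hx₀ (q hx₀ b ≫ f' ≫ Groupoid.inv (q hx₀ c))) * (u hx₀ gg b)⁻¹)
        * (u hx₀ gg b * φ (toAut hx₀ (q hx₀ a ≫ f ≫ Groupoid.inv (q hx₀ b))) * (u hx₀ gg a)⁻¹)
    group

noncomputable def φF (hx₀ : x₀ ∈ A) (F : CC A ⥤ SingleObj G) : FundamentalGroup X x₀ →* G where
  toFun γ := F.map (homC hx₀ γ)
  map_one' := by
    show F.map (homC hx₀ 1) = 1
    rw [homC_one, F.map_id, SingleObj.id_as_one]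
  map_mul' γ δ := by
    show F.map (homC hx₀ (γ * δ)) = F.map (homC hx₀ γ) * F.map (homC hx₀ δ)
    rw [homC_mul, F.map_comp, SingleObj.comp_as_mul]

lemma map_ginv (F : CC A ⥤ SingleObj G) {a b : CC A} (h : a ⟶ b) :
    F.map (Groupoid.inv h) = (F.map h)⁻¹ := by
  have : F.map (Groupoid.inv h) * F.map h = 1 := by
    rw [← SingleObj.comp_as_mul, ← F.map_comp, Groupoid.comp_inv, F.map_id, SingleObj.id_as_one]
  exact eq_inv_of_mul_eq_one_left this

noncomputable def w (hx₀ : x₀ ∈ A) (F : CC A ⥤ SingleObj G) : {a : X // a ∈ A ∧ a ≠ x₀} → G :=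
  fun a => (F.map (q hx₀ (ob a)) : G)

lemma umap (hx₀ : x₀ ∈ A) (F : CC A ⥤ SingleObj G) (a : CC A) :
    u hx₀ (w hx₀ F) a = F.map (q hx₀ a) := by
  unfold u
  split
  · rfl
  · next h =>
    push_neg at h
    obtain ⟨⟨as⟩, prop⟩ := a
    dsimp at h
    have h' := h.symm
    subst h'
    exact ((congrArg F.map (q_x₀ hx₀)).trans (F.map_id _)).symm

noncomputable def E (hx₀ : x₀ ∈ A) :
    (CC A ⥤ SingleObj G) ≃
      ((FundamentalGroup X x₀ →* G) × ({a : X // a ∈ A ∧ a ≠ x₀} → G)) where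
  toFun F := (φF hx₀ F, w hx₀ F)
  invFun P := Ψ hx₀ P.1 P.2
  left_inv F := by
    show Ψ hx₀ (φF hx₀ F) (w hx₀ F) = F
    refine CategoryTheory.Functor.ext (fun a => rfl) ?_
    intro a b f
    simp only [eqToHom_refl, Category.comp_id, Category.id_comp]
    show u hx₀ (w hx₀ F) b
        * (φF hx₀ F) (toAut hx₀ (q hx₀ a ≫ f ≫ Groupoid.inv (q hx₀ b)))
        * (u hx₀ (w hx₀ F) a)⁻¹ = F.map f
    rw [umap, umap]
    have : (φF hx₀ F) (toAut hx₀ (q hx₀ a ≫ f ≫ Groupoid.inv (q hx₀ b)))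
        = F.map (q hx₀ a ≫ f ≫ Groupoid.inv (q hx₀ b)) := rfl
    rw [this, F.map_comp, F.map_comp, SingleObj.comp_as_mul, SingleObj.comp_as_mul, map_ginv]
    group
  right_inv P := by
    obtain ⟨φ, gg⟩ := P
    refine Prod.ext ?_ ?_
    · refine MonoidHom.ext fun γ => ?_
      show u hx₀ gg (x₀C hx₀)
          * φ (toAut hx₀ (q hx₀ (x₀C hx₀) ≫ homC hx₀ γ ≫ Groupoid.inv (q hx₀ (x₀C hx₀))))
          * (u hx₀ gg (x₀C hx₀))⁻¹ = φ γ
      have hu : u hx₀ gg (x₀C hx₀) = 1 := by simp [u, x₀C]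
      have hinv : Groupoid.inv (𝟙 (x₀C hx₀)) = 𝟙 (x₀C hx₀) := by simp
      rw [hu, q_x₀, Category.id_comp, hinv, Category.comp_id, toAut_homC, one_mul, inv_one,
        mul_one]
    · funext a
      show u hx₀ gg (ob a)
          * φ (toAut hx₀ (q hx₀ (x₀C hx₀) ≫ q hx₀ (ob a) ≫ Groupoid.inv (q hx₀ (ob a))))
          * (u hx₀ gg (x₀C hx₀))⁻¹ = gg a
      have hu : u hx₀ gg (x₀C hx₀) = 1 := by simp [u, x₀C]
      have ha : u hx₀ gg (ob a) = gg a := by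
        simp only [u, ob]
        exact dif_pos a.2.2
      rw [hu, q_x₀, Category.id_comp, Groupoid.comp_inv, toAut_id, map_one, mul_one, inv_one,
        mul_one, ha]

end FGEquivAux

/-- For a path-connected space `X`, a subset `A ⊆ X`, a basepoint `x₀ ∈ A` and a group `G`,
the functors from the fundamental groupoid `Π(X,A)` (the full subcategory of the fundamental
groupoid of `X` on the objects lying in `A`) to `SingleObj G` are in bijection with pairs of
a group homomorphism `π₁(X,x₀) → G` and an arbitrary function `A∖{x₀} → G`. -/
theorem functors_fundamentalGroupoid_equiv (X : Type*) [TopologicalSpace X]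
    [PathConnectedSpace X] (A : Set X) (x₀ : X) (hx₀ : x₀ ∈ A) (G : Type*) [Group G] :
    Nonempty
      ((ObjectProperty.FullSubcategory (fun p : FundamentalGroupoid X => p.as ∈ A) ⥤ SingleObj G) ≃
        ((FundamentalGroup X x₀ →* G) × ({a : X // a ∈ A ∧ a ≠ x₀} → G))) := by
  exact ⟨FGEquivAux.E hx₀⟩
end

section
/- Let F be a finite field with q elements and g ≥ 1. Then the number of tuples (a₁,b₁,…,a_{2g},b_{2g}) ∈ ((F∖{0}) × F)^{2g} satisfying ∑_{i=1}^{2g} (a_i − 1)·b_i = 0 equals q^{2g−1}·((q−1)^{2g} + q − 1). -/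
open Finset

lemma card_ker_aux (F : Type*) [Field F] [Fintype F] (n : ℕ) (c : Fin n → F)
    (i₀ : Fin n) (hc : c i₀ ≠ 0) :
    Nat.card {b : Fin n → F // ∑ i, c i * b i = 0} = Fintype.card F ^ (n - 1) := by
  classical
  set φ : (Fin n → F) →+ F :=
    { toFun := fun b => ∑ i, c i * b i
      map_zero' := by simp
      map_add' := by
        intro x y
        simp [mul_add, Finset.sum_add_distrib] }
  have hsurj : Function.Surjective φ := by
    intro y
    refine ⟨(Pi.single i₀ (y / c i₀) : Fin n → F), ?_⟩
    have : ∀ i, c i * (Pi.single i₀ (y / c i₀) : Fin n → F) i =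
        if i = i₀ then c i₀ * (y / c i₀) else 0 := by
      intro i
      by_cases h : i = i₀ <;> simp [h, Pi.single_apply]
    simp only [φ, AddMonoidHom.coe_mk, ZeroHom.coe_mk]
    rw [Finset.sum_congr rfl fun i _ => this i, Finset.sum_ite_eq' Finset.univ i₀]
    simp [mul_div_cancel₀ _ hc]
  have hq : (0 : ℕ) < Fintype.card F := Fintype.card_pos
  have hcard : Nat.card (Fin n → F) =
      Nat.card ((Fin n → F) ⧸ φ.ker) * Nat.card φ.ker :=
    AddSubgroup.card_eq_card_quotient_mul_card_addSubgroup φ.ker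
  have hquot : Nat.card ((Fin n → F) ⧸ φ.ker) = Fintype.card F :=
    (Nat.card_congr (QuotientAddGroup.quotientKerEquivOfSurjective φ hsurj).toEquiv).trans
      (Nat.card_eq_fintype_card)
  have hdom : Nat.card (Fin n → F) = Fintype.card F ^ n := by
    simp [Nat.card_eq_fintype_card]
  have hne : 1 ≤ n := i₀.pos
  have hpow : Fintype.card F ^ n = Fintype.card F * Fintype.card F ^ (n - 1) := by
    conv_lhs => rw [← Nat.sub_add_cancel hne]
    rw [pow_succ, mul_comm]
  have hker : Nat.card φ.ker = Fintype.card F ^ (n - 1) := by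
    rw [hdom, hquot, hpow] at hcard
    exact Nat.eq_of_mul_eq_mul_left hq hcard.symm
  rw [← hker]
  apply Nat.card_congr
  exact Equiv.subtypeEquivRight fun b => by
    simp [φ, AddMonoidHom.mem_ker]

/-- For a finite field `F` with `q` elements and `g ≥ 1`, the number of tuples
`(a₁,b₁,…,a_{2g},b_{2g}) ∈ ((F∖{0}) × F)^{2g}` with `∑ (a_i − 1)·b_i = 0` equals
`q^{2g−1}·((q−1)^{2g} + q − 1)`. -/
theorem card_Xvar_finite_field (F : Type*) [Field F] [Fintype F] (q : ℕ)
    (hq : Fintype.card F = q) (g : ℕ) (hg : 1 ≤ g) :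
    Nat.card {p : Fin (2 * g) → F × F //
        (∀ i, (p i).1 ≠ 0) ∧ ∑ i, ((p i).1 - 1) * (p i).2 = 0} =
      q ^ (2 * g - 1) * ((q - 1) ^ (2 * g) + q - 1) := by
  classical
  set n := 2 * g with hn
  have hn1 : 1 ≤ n := by omega
  have hq2 : 2 ≤ q := by rw [← hq]; exact Fintype.one_lt_card
  -- The subtype of valid `a` tuples
  set A := {a : Fin n → F // ∀ i, a i ≠ 0} with hA
  -- Equivalence with a sigma type
  have e : {p : Fin n → F × F //
        (∀ i, (p i).1 ≠ 0) ∧ ∑ i, ((p i).1 - 1) * (p i).2 = 0} ≃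
      Σ a : A, {b : Fin n → F // ∑ i, (a.1 i - 1) * b i = 0} :=
    { toFun := fun p => ⟨⟨fun i => (p.1 i).1, p.2.1⟩, ⟨fun i => (p.1 i).2, p.2.2⟩⟩
      invFun := fun x => ⟨fun i => (x.1.1 i, x.2.1 i), x.1.2, x.2.2⟩
      left_inv := fun p => rfl
      right_inv := fun x => rfl }
  rw [Nat.card_congr e]
  rw [Nat.card_eq_fintype_card, Fintype.card_sigma]
  -- the "all ones" element
  have honeA : (∀ i : Fin n, (1 : F) ≠ 0) := fun _ => one_ne_zero
  set a₀ : A := ⟨fun _ => 1, honeA⟩ with ha₀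
  have hfiber : ∀ a : A,
      Fintype.card {b : Fin n → F // ∑ i, (a.1 i - 1) * b i = 0} =
        if a = a₀ then q ^ n else q ^ (n - 1) := by
    intro a
    by_cases h : a = a₀
    · subst h
      rw [if_pos rfl]
      have : ∀ b : Fin n → F, ∑ i, (a₀.1 i - 1) * b i = 0 := by
        intro b; simp [ha₀]
      rw [← hq]
      rw [Fintype.card_of_subtype Finset.univ (by simp [this])]
      simp
    · rw [if_neg h]
      obtain ⟨i₀, hi₀⟩ : ∃ i, a.1 i ≠ 1 := by
        by_contra hcon
        push_neg at hcon
        exact h (Subtype.ext (funext fun i => hcon i))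
      have := card_ker_aux F n (fun i => a.1 i - 1) i₀ (sub_ne_zero.mpr hi₀)
      rw [Nat.card_eq_fintype_card] at this
      rw [this, hq]
  rw [Finset.sum_congr rfl fun a _ => hfiber a]
  have hcardA : Fintype.card A = (q - 1) ^ n := by
    rw [Fintype.card_congr (Equiv.subtypePiEquivPi (p := fun _ : Fin n => fun x : F => x ≠ 0))]
    rw [Fintype.card_pi]
    have : Fintype.card {x : F // x ≠ 0} = q - 1 := by
      rw [Fintype.card_subtype_compl, Fintype.card_subtype_eq, hq]
    simp [this]
  rw [Finset.sum_ite, Finset.filter_eq' Finset.univ a₀, if_pos (Finset.mem_univ a₀),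
    Finset.filter_ne' Finset.univ a₀, Finset.sum_const, Finset.sum_const,
    Finset.card_singleton, Finset.card_erase_of_mem (Finset.mem_univ a₀),
    Finset.card_univ, hcardA]
  have hqpow : q ^ n = q * q ^ (n - 1) := by
    conv_lhs => rw [← Nat.sub_add_cancel hn1]
    rw [pow_succ, mul_comm]
  simp only [smul_eq_mul, one_mul]
  obtain ⟨x, hxe⟩ : ∃ x, (q - 1) ^ n = x + 1 :=
    ⟨(q - 1) ^ n - 1, by
      have : 1 ≤ (q - 1) ^ n := Nat.one_le_pow _ _ (by omega)
      omega⟩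
  rw [hxe, hqpow]
  have h1 : x + 1 + q - 1 = x + q := by omega
  rw [h1, Nat.add_sub_cancel]
  ring
end

section
/- Let F be a finite field with q elements and g ≥ 1. Consider the group Aff(F) of invertible affine transformations of F, i.e., maps T_{a,b} : x ↦ a·x + b with a ∈ F∖{0}, b ∈ F, under composition. Then the number of 2g-tuples (f₁,…,f_{2g}) of elements of Aff(F) satisfying the surface-group relation ∏_{i=1}^{g} [f_{2i−1}, f_{2i}] = id equals q^{2g−1}·((q−1)^{2g} + q − 1). -/
open Finset
open scoped Classical
open scoped commutatorElement

namespace SurfaceRepAux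


variable {F : Type*} [Field F]

noncomputable def alin (f : F ≃ᵃ[F] F) : F := f.linear 1
noncomputable def acst (f : F ≃ᵃ[F] F) : F := f 0

lemma aff_apply (f : F ≃ᵃ[F] F) (x : F) : f x = alin f * x + acst f := by
  have h : f (x +ᵥ (0:F)) = f.linear x +ᵥ f 0 := f.map_vadd 0 x
  simp only [vadd_eq_add, add_zero] at h
  have h2 : f.linear x = x * f.linear 1 := by
    calc f.linear x = f.linear (x • 1) := by rw [smul_eq_mul, mul_one]
    _ = x • f.linear 1 := map_smul _ _ _
    _ = x * f.linear 1 := smul_eq_mul ..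
  rw [h, h2, alin, acst]; ring

lemma alin_ne_zero (f : F ≃ᵃ[F] F) : alin f ≠ 0 := by
  intro h
  have h1 : f.linear 1 = f.linear 0 := by simp only [alin] at h; simp [h]
  exact one_ne_zero (f.linear.injective h1)

lemma aff_inv_apply (f : F ≃ᵃ[F] F) (x : F) :
    (f⁻¹ : F ≃ᵃ[F] F) x = (alin f)⁻¹ * (x - acst f) := by
  have hf := alin_ne_zero f
  apply f.injective
  have h1 : f ((f⁻¹ : F ≃ᵃ[F] F) x) = x := by
    calc f ((f⁻¹ : F ≃ᵃ[F] F) x) = (f * f⁻¹) x := by rw [AffineEquiv.coe_mul]; rfl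
    _ = x := by rw [mul_inv_cancel]; rfl
  rw [h1, aff_apply]
  field_simp
  ring

lemma comm_apply (f g : F ≃ᵃ[F] F) (x : F) :
    ⁅f, g⁆ x = x + ((alin f - 1) * acst g - (alin g - 1) * acst f) := by
  have hf := alin_ne_zero f
  have hg := alin_ne_zero g
  show (f * g * f⁻¹ * g⁻¹) x = _
  simp only [AffineEquiv.coe_mul, Function.comp_apply]
  rw [aff_inv_apply, aff_inv_apply, aff_apply, aff_apply]
  field_simp
  ring

noncomputable def tval (p : (F ≃ᵃ[F] F) × (F ≃ᵃ[F] F)) : F :=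
  (alin p.1 - 1) * acst p.2 - (alin p.2 - 1) * acst p.1

lemma prod_comm_apply (L : List ((F ≃ᵃ[F] F) × (F ≃ᵃ[F] F))) (x : F) :
    (L.map fun p => ⁅p.1, p.2⁆).prod x = x + (L.map tval).sum := by
  induction L with
  | nil => simp
  | cons p L ih =>
    simp only [List.map_cons, List.prod_cons, List.sum_cons, AffineEquiv.coe_mul,
      Function.comp_apply]
    rw [ih, comm_apply, tval]
    ring

lemma prod_comm_eq_one_iff (L : List ((F ≃ᵃ[F] F) × (F ≃ᵃ[F] F))) :
    (L.map fun p => ⁅p.1, p.2⁆).prod = 1 ↔ (L.map tval).sum = 0 := by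
  constructor
  · intro h
    have := prod_comm_apply L 0
    rw [h] at this
    simpa using this.symm
  · intro h
    ext x
    rw [prod_comm_apply, h, add_zero]
    rfl

noncomputable def affMk (a : {a : F // a ≠ 0}) (b : F) : F ≃ᵃ[F] F :=
  ((LinearEquiv.smulOfUnit (Units.mk0 a.1 a.2)).toAffineEquiv).trans
    (AffineEquiv.constVAdd F F b)

lemma affMk_apply (a : {a : F // a ≠ 0}) (b : F) (x : F) : affMk a b x = a.1 * x + b := by
  simp [affMk, LinearEquiv.smulOfUnit, AffineEquiv.constVAdd, Units.smul_def, Units.mk0,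
    Equiv.constVAdd]
  ring

lemma alin_eq (f : F ≃ᵃ[F] F) : alin f = f 1 - f 0 := by
  rw [aff_apply, aff_apply]; ring

noncomputable def affParam : (F ≃ᵃ[F] F) ≃ {a : F // a ≠ 0} × F where
  toFun f := (⟨alin f, alin_ne_zero f⟩, acst f)
  invFun p := affMk p.1 p.2
  left_inv f := by
    ext x
    rw [affMk_apply, ← aff_apply]
  right_inv p := by
    obtain ⟨a, b⟩ := p
    refine Prod.ext (Subtype.ext ?_) ?_
    · show alin (affMk a b) = a.1
      rw [alin_eq, affMk_apply, affMk_apply]; ring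
    · show acst (affMk a b) = b
      show affMk a b 0 = b
      rw [affMk_apply]; ring

lemma card_ker_eq {F : Type*} [Field F] [Fintype F] {ι : Type*} [Fintype ι] [DecidableEq ι]
    (c : ι → F) (j : ι) (hj : c j ≠ 0) :
    Nat.card {v : ι → F // ∑ i, c i * v i = 0} =
      Fintype.card F ^ (Fintype.card ι - 1) := by
  classical
  set φ : (ι → F) →+ F :=
    { toFun := fun v => ∑ i, c i * v i
      map_zero' := by simp
      map_add' := by intro v w; simp [mul_add, Finset.sum_add_distrib] } with hφ
  have hsurj : Function.Surjective φ := by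
    intro y
    refine ⟨Pi.single j ((c j)⁻¹ * y), ?_⟩
    simp only [hφ, AddMonoidHom.coe_mk, ZeroHom.coe_mk]
    rw [Finset.sum_eq_single j]
    · rw [Pi.single_eq_same]; field_simp
    · intro i _ hij; rw [Pi.single_eq_of_ne hij, mul_zero]
    · intro h; exact absurd (mem_univ j) h
  have hcard : Nat.card (ι → F) = Nat.card ((ι → F) ⧸ φ.ker) * Nat.card φ.ker :=
    AddSubgroup.card_eq_card_quotient_mul_card_addSubgroup _
  have hq : Nat.card ((ι → F) ⧸ φ.ker) = Fintype.card F := by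
    rw [Nat.card_congr (QuotientAddGroup.quotientKerEquivOfSurjective φ hsurj).toEquiv]
    exact Nat.card_eq_fintype_card
  have hdom : Nat.card (ι → F) = Fintype.card F ^ Fintype.card ι := by
    rw [Nat.card_eq_fintype_card, Fintype.card_fun]
  have hker : Nat.card {v : ι → F // ∑ i, c i * v i = 0} = Nat.card φ.ker := by
    apply Nat.card_congr
    exact Equiv.subtypeEquivRight fun v => by
      simp [AddMonoidHom.mem_ker, hφ]
  rw [hker]
  have hq2 : 0 < Fintype.card F := Fintype.card_pos
  have hι : 1 ≤ Fintype.card ι := by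
    have : Nonempty ι := ⟨j⟩
    exact Fintype.card_pos
  rw [hq, hdom] at hcard
  obtain ⟨k, hk⟩ : ∃ k, Fintype.card ι = k + 1 :=
    Nat.exists_eq_succ_of_ne_zero (Nat.one_le_iff_ne_zero.mp hι)
  rw [hk] at hcard ⊢
  simp only [Nat.add_sub_cancel]
  rw [pow_succ'] at hcard
  exact (Nat.eq_of_mul_eq_mul_left hq2 hcard).symm

def keq (g : ℕ) : (Fin g ⊕ Fin g) ≃ Fin (2 * g) where
  toFun := Sum.elim (fun i => ⟨2 * i.1, by have := i.isLt; omega⟩)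
    (fun i => ⟨2 * i.1 + 1, by have := i.isLt; omega⟩)
  invFun j := if j.1 % 2 = 0 then Sum.inl ⟨j.1 / 2, by have := j.isLt; omega⟩
    else Sum.inr ⟨j.1 / 2, by have := j.isLt; omega⟩
  left_inv s := by
    rcases s with i | i
    · dsimp only [Sum.elim_inl]
      rw [if_pos (by omega)]
      exact congrArg Sum.inl (Fin.ext (by show 2 * i.1 / 2 = i.1; omega))
    · dsimp only [Sum.elim_inr]
      rw [if_neg (by omega)]
      exact congrArg Sum.inr (Fin.ext (by show (2 * i.1 + 1) / 2 = i.1; omega))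
  right_inv j := by
    by_cases h : j.1 % 2 = 0
    · dsimp only
      rw [if_pos h, Sum.elim_inl]
      exact Fin.ext (by show 2 * (j.1 / 2) = j.1; omega)
    · dsimp only
      rw [if_neg h, Sum.elim_inr]
      exact Fin.ext (by show 2 * (j.1 / 2) + 1 = j.1; omega)

lemma nat_card_sigma {ι : Type*} [Fintype ι] (f : ι → Type*) [∀ i, Finite (f i)] :
    Nat.card (Σ i, f i) = ∑ i, Nat.card (f i) := by
  have : ∀ i, Fintype (f i) := fun i => Fintype.ofFinite (f i)
  simp [Nat.card_eq_fintype_card, Fintype.card_sigma]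

lemma affParam_fst {F : Type*} [Field F] (f : F ≃ᵃ[F] F) :
    (((affParam : (F ≃ᵃ[F] F) ≃ _) f).1 : F) = alin f := rfl

lemma affParam_snd {F : Type*} [Field F] (f : F ≃ᵃ[F] F) :
    ((affParam : (F ≃ᵃ[F] F) ≃ _) f).2 = acst f := rfl

lemma keq_inl (g : ℕ) (i : Fin g) (h : 2 * i.1 < 2 * g) : keq g (Sum.inl i) = ⟨2 * i.1, h⟩ := rfl

lemma keq_inr (g : ℕ) (i : Fin g) (h : 2 * i.1 + 1 < 2 * g) :
    keq g (Sum.inr i) = ⟨2 * i.1 + 1, h⟩ := rfl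

lemma fiber_card {F : Type*} [Field F] [Fintype F] (g : ℕ)
    (A : Fin (2 * g) → {a : F // a ≠ 0}) :
    Nat.card {B : Fin (2 * g) → F //
        ∑ i : Fin g, (((A (keq g (Sum.inl i)) : F) - 1) * B (keq g (Sum.inr i))
          - ((A (keq g (Sum.inr i)) : F) - 1) * B (keq g (Sum.inl i))) = 0} =
      if ∀ j, (A j : F) = 1 then Fintype.card F ^ (2 * g)
        else Fintype.card F ^ (2 * g - 1) := by
  classical
  set cvec : (Fin g ⊕ Fin g) → F :=
    Sum.elim (fun i => -((A (keq g (Sum.inr i)) : F) - 1))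
      (fun i => (A (keq g (Sum.inl i)) : F) - 1) with hcvec
  have hsum : ∀ B : Fin (2 * g) → F,
      (∑ j, cvec j * B (keq g j)) =
        ∑ i : Fin g, (((A (keq g (Sum.inl i)) : F) - 1) * B (keq g (Sum.inr i))
          - ((A (keq g (Sum.inr i)) : F) - 1) * B (keq g (Sum.inl i))) := by
    intro B
    rw [Fintype.sum_sum_type, ← Finset.sum_add_distrib]
    refine Finset.sum_congr rfl fun i _ => ?_
    simp only [hcvec, Sum.elim_inl, Sum.elim_inr]
    ring
  have hequiv : {B : Fin (2 * g) → F //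
        ∑ i : Fin g, (((A (keq g (Sum.inl i)) : F) - 1) * B (keq g (Sum.inr i))
          - ((A (keq g (Sum.inr i)) : F) - 1) * B (keq g (Sum.inl i))) = 0} ≃
      {v : (Fin g ⊕ Fin g) → F // ∑ j, cvec j * v j = 0} := by
    refine Equiv.subtypeEquiv (Equiv.arrowCongr (keq g).symm (Equiv.refl F)) fun B => ?_
    rw [← hsum B]
    refine Eq.congr_left (Finset.sum_congr rfl fun j _ => ?_)
    simp [Equiv.arrowCongr]
  by_cases hA : ∀ j, (A j : F) = 1
  · rw [if_pos hA]
    have : ∀ B : Fin (2 * g) → F,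
        ∑ i : Fin g, (((A (keq g (Sum.inl i)) : F) - 1) * B (keq g (Sum.inr i))
          - ((A (keq g (Sum.inr i)) : F) - 1) * B (keq g (Sum.inl i))) = 0 := by
      intro B
      refine Finset.sum_eq_zero fun i _ => ?_
      rw [hA, hA]
      ring
    rw [Nat.card_congr (Equiv.subtypeUnivEquiv this), Nat.card_eq_fintype_card,
      Fintype.card_fun, Fintype.card_fin]
  · rw [if_neg hA]
    push_neg at hA
    obtain ⟨j, hj⟩ := hA
    have hkj : keq g ((keq g).symm j) = j := (keq g).apply_symm_apply j
    have hex : ∃ j₀, cvec j₀ ≠ 0 := by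
      rcases h0 : (keq g).symm j with i | i
      · rw [h0] at hkj
        exact ⟨Sum.inr i, by simp only [hcvec, Sum.elim_inr, hkj]; exact sub_ne_zero.mpr hj⟩
      · rw [h0] at hkj
        refine ⟨Sum.inl i, ?_⟩
        simp only [hcvec, Sum.elim_inl, hkj]
        exact neg_ne_zero.mpr (sub_ne_zero.mpr hj)
    obtain ⟨j₀, hj₀⟩ := hex
    rw [Nat.card_congr hequiv, card_ker_eq cvec j₀ hj₀]
    congr 1
    simp
    omega

end SurfaceRepAux

open SurfaceRepAux Finset in
/-- For a finite field `F` with `q` elements and `g ≥ 1`, the number of `2g`-tuples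
`(f₁,…,f_{2g})` of elements of the affine group `Aff(F) = (F ≃ᵃ[F] F)` satisfying the
surface-group relation `∏_{i=1}^{g} [f_{2i−1}, f_{2i}] = id` (indices here from `0`)
equals `q^{2g−1}·((q−1)^{2g} + q − 1)`. -/
theorem card_surfaceRep_aff_finite_field (F : Type*) [Field F] [Fintype F] (q : ℕ)
    (hq : Fintype.card F = q) (g : ℕ) (hg : 1 ≤ g) :
    Nat.card {f : Fin (2 * g) → (F ≃ᵃ[F] F) //
        ((List.finRange g).map fun i =>
            ⁅f ⟨2 * i.1, by have := i.isLt; omega⟩,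
              f ⟨2 * i.1 + 1, by have := i.isLt; omega⟩⁆).prod = 1} =
      q ^ (2 * g - 1) * ((q - 1) ^ (2 * g) + q - 1) := by
  classical
  subst hq
  set S := {a : F // a ≠ 0} with hS
  -- Step 1: relation in terms of sums
  have hrel : ∀ f : Fin (2 * g) → (F ≃ᵃ[F] F),
      (((List.finRange g).map fun i =>
          ⁅f ⟨2 * i.1, by have := i.isLt; omega⟩,
            f ⟨2 * i.1 + 1, by have := i.isLt; omega⟩⁆).prod = 1) ↔
        ∑ i : Fin g, tval (f (keq g (Sum.inl i)), f (keq g (Sum.inr i))) = 0 := by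
    intro f
    have hL : ((List.finRange g).map fun i =>
          ⁅f ⟨2 * i.1, by have := i.isLt; omega⟩,
            f ⟨2 * i.1 + 1, by have := i.isLt; omega⟩⁆) =
        (((List.finRange g).map fun i =>
          (f (keq g (Sum.inl i)), f (keq g (Sum.inr i)))).map fun p => ⁅p.1, p.2⁆) := by
      rw [List.map_map]
      refine List.map_congr_left fun i _ => ?_
      rw [Function.comp_apply, keq_inl g i (by have := i.isLt; omega),
        keq_inr g i (by have := i.isLt; omega)]
    rw [hL, prod_comm_eq_one_iff, List.map_map, ← Fin.sum_univ_def]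
    rfl
  -- Step 2: transport to parameters
  have e2 : {f : Fin (2 * g) → (F ≃ᵃ[F] F) //
        ((List.finRange g).map fun i =>
            ⁅f ⟨2 * i.1, by have := i.isLt; omega⟩,
              f ⟨2 * i.1 + 1, by have := i.isLt; omega⟩⁆).prod = 1} ≃
      {p : (Fin (2 * g) → S) × (Fin (2 * g) → F) //
        ∑ i : Fin g, (((p.1 (keq g (Sum.inl i)) : F) - 1) * p.2 (keq g (Sum.inr i))
          - ((p.1 (keq g (Sum.inr i)) : F) - 1) * p.2 (keq g (Sum.inl i))) = 0} := by
    refine Equiv.subtypeEquiv ((Equiv.piCongrRight fun _ => affParam (F := F)).trans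
      (Equiv.arrowProdEquivProdArrow (Fin (2 * g)) (fun _ => S) (fun _ => F))) fun f => ?_
    rw [hrel f]
    simp only [Equiv.trans_apply, Equiv.arrowProdEquivProdArrow, Equiv.coe_fn_mk,
      Equiv.piCongrRight_apply, Pi.map_apply, affParam_fst, affParam_snd, tval]
  rw [Nat.card_congr e2]
  rw [Nat.card_congr (Equiv.subtypeProdEquivSigmaSubtype fun (A : Fin (2 * g) → S)
    (B : Fin (2 * g) → F) =>
      ∑ i : Fin g, (((A (keq g (Sum.inl i)) : F) - 1) * B (keq g (Sum.inr i))
        - ((A (keq g (Sum.inr i)) : F) - 1) * B (keq g (Sum.inl i))) = 0)]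
  rw [nat_card_sigma]
  set q := Fintype.card F with hq'
  have hq2 : 2 ≤ q := Fintype.one_lt_card
  set A₁ : Fin (2 * g) → S := fun _ => ⟨1, one_ne_zero⟩ with hA₁
  have hiff : ∀ A : Fin (2 * g) → S, (∀ j, (A j : F) = 1) ↔ A = A₁ := by
    intro A
    constructor
    · intro h; funext j; exact Subtype.ext (h j)
    · intro h j; rw [h]
  have hle : q ^ (2 * g - 1) ≤ q ^ (2 * g) := Nat.pow_le_pow_right (by omega) (by omega)
  have hsplit : ∀ A : Fin (2 * g) → S,
      (if ∀ j, (A j : F) = 1 then q ^ (2 * g) else q ^ (2 * g - 1)) =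
        q ^ (2 * g - 1) + (if A = A₁ then q ^ (2 * g) - q ^ (2 * g - 1) else 0) := by
    intro A
    by_cases hA : A = A₁
    · rw [if_pos ((hiff A).mpr hA), if_pos hA]; omega
    · rw [if_neg (fun h => hA ((hiff A).mp h)), if_neg hA]; omega
  have hcardS : Fintype.card S = q - 1 := by
    have h1 := Fintype.card_subtype_compl (α := F) (fun a : F => a = 0)
    rw [Fintype.card_subtype_eq (0 : F)] at h1
    rw [hq']
    convert h1 using 2
  have hb1 : 1 ≤ (q - 1) ^ (2 * g) := Nat.one_le_pow _ _ (by omega)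
  have hq2g : q ^ (2 * g) = q ^ (2 * g - 1) * q := by
    rw [← pow_succ]; congr 1; omega
  calc (∑ A : Fin (2 * g) → S, Nat.card {B : Fin (2 * g) → F //
        ∑ i : Fin g, (((A (keq g (Sum.inl i)) : F) - 1) * B (keq g (Sum.inr i))
          - ((A (keq g (Sum.inr i)) : F) - 1) * B (keq g (Sum.inl i))) = 0})
      = ∑ A : Fin (2 * g) → S, (if ∀ j, (A j : F) = 1 then q ^ (2 * g)
          else q ^ (2 * g - 1)) := Finset.sum_congr rfl fun A _ => fiber_card g A
    _ = ∑ A : Fin (2 * g) → S, (q ^ (2 * g - 1)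
          + (if A = A₁ then q ^ (2 * g) - q ^ (2 * g - 1) else 0)) :=
        Finset.sum_congr rfl fun A _ => hsplit A
    _ = Fintype.card (Fin (2 * g) → S) * q ^ (2 * g - 1)
          + (q ^ (2 * g) - q ^ (2 * g - 1)) := by
        rw [Finset.sum_add_distrib, Finset.sum_const, card_univ, smul_eq_mul,
          Finset.sum_ite_eq' univ A₁ (fun _ => q ^ (2 * g) - q ^ (2 * g - 1)),
          if_pos (mem_univ A₁)]
    _ = (q - 1) ^ (2 * g) * q ^ (2 * g - 1) + (q ^ (2 * g) - q ^ (2 * g - 1)) := by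
        rw [Fintype.card_fun, Fintype.card_fin, hcardS]
    _ = q ^ (2 * g - 1) * ((q - 1) ^ (2 * g) + q - 1) := by
        have h3 : (q - 1) ^ (2 * g) + q - 1 = (q - 1) ^ (2 * g) + (q - 1) := by omega
        rw [h3, Nat.mul_add, mul_comm ((q - 1) ^ (2 * g)) (q ^ (2 * g - 1))]
        have h4 : q ^ (2 * g - 1) * (q - 1) = q ^ (2 * g) - q ^ (2 * g - 1) := by
          rw [Nat.mul_sub, mul_one, ← hq2g]
        rw [h4]
end
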